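/- Let t, s : ℤ_2 → ℤ_2 be 1-Lipschitz functions satisfying, for all y ∈ ℤ_2: t(2y) = 2·t(y), t(1 + 2y) = 1 + 2·s(y), s(2y) = 2·s(y), and s(1 + 2y) = 2·t(y) (the wreath recursion t = (t, s), s = (s, t) with output sending both letters to 0). Then the sequence of reduced van der Put coefficients of t is the Thue–Morse sequence: for every n ≥ 0, b^t_n = (((sum of the binary digits of n) mod 2) : ℤ_2). -/

import Mathlib

/-- The van der Put coefficients of `f : ℤ_2 → ℤ_2`:
`B^f_n = f(n)` for `n < 2` and `B^f_n = f(n) - f(n mod 2^⌊log_2 n⌋)` for `n ≥ 2`. -/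
noncomputable def vdpB2 (f : PadicInt 2 → PadicInt 2) (n : ℕ) : PadicInt 2 :=
  if n < 2 then f n else f n - f ((n % 2 ^ Nat.log 2 n : ℕ))

/-- For the 1-Lipschitz maps `t, s : ℤ_2 → ℤ_2` given by the wreath recursion
`t = (t, s)`, `s = (s, t)` with output sending both letters to `0`, the sequence of
reduced van der Put coefficients of `t` is the Thue–Morse sequence. -/
theorem thueMorse_reduced_vanDerPut (t s : PadicInt 2 → PadicInt 2)
    (ht : ∀ x y : PadicInt 2, ‖t x - t y‖ ≤ ‖x - y‖)
    (hs : ∀ x y : PadicInt 2, ‖s x - s y‖ ≤ ‖x - y‖)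
    (ht0 : ∀ y : PadicInt 2, t (2 * y) = 2 * t y)
    (ht1 : ∀ y : PadicInt 2, t (1 + 2 * y) = 1 + 2 * s y)
    (hs0 : ∀ y : PadicInt 2, s (2 * y) = 2 * s y)
    (hs1 : ∀ y : PadicInt 2, s (1 + 2 * y) = 2 * t y)
    -- `bt` is the sequence of reduced van der Put coefficients of `t`
    (bt : ℕ → PadicInt 2)
    (hbt : ∀ n : ℕ, (2 : PadicInt 2) ^ Nat.log 2 n * bt n = vdpB2 t n) :
    ∀ n : ℕ, bt n = (((Nat.digits 2 n).sum % 2 : ℕ) : PadicInt 2) := by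
  have two_ne : (2 : PadicInt 2) ≠ 0 := two_ne_zero
  -- basic values
  have ht00 : t 0 = 0 := by
    have h := ht0 0; rw [mul_zero] at h; linear_combination -h
  have hs00 : s 0 = 0 := by
    have h := hs0 0; rw [mul_zero] at h; linear_combination -h
  have ht11 : t 1 = 1 := by
    have h := ht1 0; rw [mul_zero, add_zero] at h
    rw [h, hs00, mul_zero, add_zero]
  have hs11 : s 1 = 0 := by
    have h := hs1 0; rw [mul_zero, add_zero] at h
    rw [h, ht00, mul_zero]
  -- key computation
  have key : ∀ n : ℕ, 1 ≤ n →
      t n - t ((n % 2 ^ Nat.log 2 n : ℕ))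
        = 2 ^ Nat.log 2 n * (((Nat.digits 2 n).sum % 2 : ℕ) : PadicInt 2)
      ∧ s n - s ((n % 2 ^ Nat.log 2 n : ℕ))
        = 2 ^ Nat.log 2 n * ((((Nat.digits 2 n).sum + 1) % 2 : ℕ) : PadicInt 2) := by
    intro n
    induction n using Nat.strong_induction_on with
    | _ n ih =>
      intro hn
      rcases eq_or_lt_of_le hn with h1 | h2
      · -- n = 1
        rw [← h1]
        norm_num [ht00, hs00, ht11, hs11]
      · -- n ≥ 2
        have hn2 : 2 ≤ n := h2
        set m := n / 2 with hmdef
        have hm1 : 1 ≤ m := Nat.one_le_div_iff (by norm_num) |>.2 hn2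
        have hmlt : m < n := Nat.div_lt_self (by omega) (by norm_num)
        have hnm : n = 2 * m + n % 2 := by omega
        set k := Nat.log 2 m with hkdef
        have hlog : Nat.log 2 n = k + 1 := by
          rw [Nat.log_of_one_lt_of_le (by norm_num) hn2]
        -- mod computation
        have hmod : n % 2 ^ (k + 1) = 2 * (m % 2 ^ k) + n % 2 := by
          have h2k : 0 < (2:ℕ) ^ k := Nat.pow_pos (by norm_num)
          have hmm : m % 2 ^ k + 2 ^ k * (m / 2 ^ k) = m := Nat.mod_add_div _ _
          have hlt : 2 * (m % 2 ^ k) + n % 2 < 2 ^ (k + 1) := by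
            have := Nat.mod_lt m h2k
            have := Nat.mod_lt n (show 0 < 2 by norm_num)
            rw [pow_succ]
            omega
          have hsplit : 2 ^ (k + 1) * (m / 2 ^ k) = 2 * (2 ^ k * (m / 2 ^ k)) := by ring
          calc n % 2 ^ (k + 1)
              = (2 * (m % 2 ^ k) + n % 2 + 2 ^ (k + 1) * (m / 2 ^ k)) % 2 ^ (k + 1) := by
                congr 1
                omega
            _ = (2 * (m % 2 ^ k) + n % 2) % 2 ^ (k + 1) := by
                rw [Nat.add_mul_mod_self_left]
            _ = 2 * (m % 2 ^ k) + n % 2 := Nat.mod_eq_of_lt hlt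
        obtain ⟨iht, ihs⟩ := ih m hmlt hm1
        have hdig : Nat.digits 2 n = n % 2 :: Nat.digits 2 m :=
          Nat.digits_def' (by norm_num) (by omega)
        rcases Nat.even_or_odd n with he | ho
        · -- n even
          have hr : n % 2 = 0 := Nat.even_iff.1 he
          have hcn : ((n : ℕ) : PadicInt 2) = 2 * (m : PadicInt 2) := by
            rw [hnm, hr]; push_cast; ring
          have hcm : ((n % 2 ^ Nat.log 2 n : ℕ) : PadicInt 2)
              = 2 * ((m % 2 ^ k : ℕ) : PadicInt 2) := by
            rw [hlog, hmod, hr]; push_cast; ring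
          have hsum : (Nat.digits 2 n).sum % 2 = (Nat.digits 2 m).sum % 2 := by
            rw [hdig]; simp [hr]
          have hsum1 : ((Nat.digits 2 n).sum + 1) % 2 = ((Nat.digits 2 m).sum + 1) % 2 := by
            rw [hdig]; simp [hr]
          constructor
          · rw [hcn, hcm, ht0, ht0, hlog, hsum, pow_succ]
            linear_combination 2 * iht
          · rw [hcn, hcm, hs0, hs0, hlog, hsum1, pow_succ]
            linear_combination 2 * ihs
        · -- n odd
          have hr : n % 2 = 1 := Nat.odd_iff.1 ho
          have hcn : ((n : ℕ) : PadicInt 2) = 1 + 2 * (m : PadicInt 2) := by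
            rw [hnm, hr]; push_cast; ring
          have hcm : ((n % 2 ^ Nat.log 2 n : ℕ) : PadicInt 2)
              = 1 + 2 * ((m % 2 ^ k : ℕ) : PadicInt 2) := by
            rw [hlog, hmod, hr]; push_cast; ring
          have hsum : (Nat.digits 2 n).sum % 2 = ((Nat.digits 2 m).sum + 1) % 2 := by
            rw [hdig]; simp [hr]; omega
          have hsum1 : ((Nat.digits 2 n).sum + 1) % 2 = (Nat.digits 2 m).sum % 2 := by
            rw [hdig]; simp [hr]; omega
          constructor
          · rw [hcn, hcm, ht1, ht1, hlog, hsum, pow_succ]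
            linear_combination 2 * ihs
          · rw [hcn, hcm, hs1, hs1, hlog, hsum1, pow_succ]
            linear_combination 2 * iht
  -- conclude
  intro n
  have hpow : (2 : PadicInt 2) ^ Nat.log 2 n ≠ 0 := pow_ne_zero _ two_ne
  apply mul_left_cancel₀ hpow
  rw [hbt n]
  rcases Nat.lt_or_ge n 2 with h | h
  · interval_cases n
    · simp [vdpB2, ht00]
    · simp [vdpB2, ht11]
  · have hk := (key n (by omega)).1
    rw [vdpB2, if_neg (by omega), hk]
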